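/- Let n be odd, let k be a positive integer with gcd(k, n) = 1, and let a, b, c be elements of L = GF(2^n), not all zero. Then the exponential sum S = \sum_{x \in L} (-1)^{Tr(a x + b x^{2^k+1} + c x^{2^{2k}+1})} (an integer) takes one of the five values 0, 2^{(n+1)/2}, -2^{(n+1)/2}, 2^{(n+3)/2}, -2^{(n+3)/2}. -/

import Mathlib

noncomputable instance {n : ℕ} : Fintype (GaloisField 2 n) := Fintype.ofFinite _

namespace Stmt1

def χ (t : ZMod 2) : ℤ := if t = 0 then 1 else -1

lemma χ_add (s t : ZMod 2) : χ (s + t) = χ s * χ t := by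
  fin_cases s <;> fin_cases t <;> rfl

lemma χ_add_one (t : ZMod 2) : χ (t + 1) = - χ t := by
  fin_cases t <;> rfl

lemma χ_zero : χ 0 = 1 := rfl

lemma zmod2_ne_zero {t : ZMod 2} (h : t ≠ 0) : t = 1 := by
  fin_cases t
  · exact absurd rfl h
  · rfl

lemma zmod2_add_self (t : ZMod 2) : t + t = 0 := by fin_cases t <;> rfl

section F
variable {F : Type*} [Field F] [Fintype F] [Algebra (ZMod 2) F] [CharP F 2]

noncomputable def Tr : F → ZMod 2 := fun x => Algebra.trace (ZMod 2) F x

omit [Fintype F] [CharP F 2] in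
lemma Tr_add (x y : F) : Tr (x + y) = Tr x + Tr y := map_add _ _ _

omit [Fintype F] [CharP F 2] in
lemma Tr_zero : Tr (0 : F) = 0 := map_zero _

lemma Tr_sq (x : F) : Tr (x ^ 2) = Tr x := by
  have hinj := (algebraMap (ZMod 2) F).injective
  apply hinj
  have hsq : ∀ t : ZMod 2, t ^ 2 = t := by decide
  calc algebraMap (ZMod 2) F (Tr (x ^ 2))
      = ∑ σ : F ≃ₐ[ZMod 2] F, σ (x ^ 2) := trace_eq_sum_automorphisms _
    _ = ∑ σ : F ≃ₐ[ZMod 2] F, (σ x) ^ 2 :=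
        Finset.sum_congr rfl fun σ _ => map_pow σ x 2
    _ = (∑ σ : F ≃ₐ[ZMod 2] F, σ x) ^ 2 := (sum_pow_char (p := 2) _ _).symm
    _ = (algebraMap (ZMod 2) F (Tr x)) ^ 2 := by rw [show Tr x = Algebra.trace (ZMod 2) F x from rfl, trace_eq_sum_automorphisms]
    _ = algebraMap (ZMod 2) F ((Tr x) ^ 2) := by rw [map_pow]
    _ = algebraMap (ZMod 2) F (Tr x) := by rw [hsq]

lemma Tr_pow_pow (j : ℕ) (x : F) : Tr (x ^ (2 ^ j)) = Tr x := by
  induction j with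
  | zero => simp
  | succ j ih =>
    have : x ^ (2 ^ (j+1)) = (x ^ (2 ^ j)) ^ 2 := by
      rw [← pow_mul, pow_succ]
    rw [this, Tr_sq, ih]

section Fcard
variable {F : Type*} [Field F] [Fintype F] [Algebra (ZMod 2) F] [CharP F 2]
variable {n : ℕ} (hcard : Fintype.card F = 2 ^ n)

include hcard

lemma pow_card_n (z : F) : z ^ (2 ^ n) = z := by
  rw [← hcard]; exact FiniteField.pow_card z

lemma pow_mul_n (s : ℕ) (z : F) : z ^ (2 ^ (n * s)) = z := by
  induction s with
  | zero => simp
  | succ s ih =>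
    have : 2 ^ (n * (s + 1)) = 2 ^ (n * s) * 2 ^ n := by rw [← pow_add, Nat.mul_succ]
    rw [this, pow_mul, ih, pow_card_n hcard]

lemma pow_mod_n (j : ℕ) (z : F) : z ^ (2 ^ j) = z ^ (2 ^ (j % n)) := by
  conv_lhs => rw [← Nat.div_add_mod j n]
  rw [pow_add, mul_comm, pow_mul, pow_mul_n hcard]

lemma pow_eq_of_mod_eq {j j' : ℕ} (h : j % n = j' % n) (z : F) :
    z ^ (2 ^ j) = z ^ (2 ^ j') := by
  rw [pow_mod_n hcard j z, pow_mod_n hcard j' z, h]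

/-- fixed points of `x ↦ x^{2^k}` are `0` and `1` when `gcd(k,n)=1`. -/
lemma fixed_points {k : ℕ} (hkn : Nat.gcd k n = 1) (hn0 : n ≠ 0) (z : F)
    (hz : z ^ (2 ^ k) = z) : z = 0 ∨ z = 1 := by
  have hz2 : z ^ 2 = z := by
    rcases eq_or_ne n 1 with h1 | h1
    · have := pow_card_n hcard z
      rwa [h1, pow_one] at this
    · obtain ⟨m, -, hm⟩ := Nat.exists_mul_mod_eq_one_of_coprime hkn
        (by omega)
      have key : ∀ s : ℕ, z ^ (2 ^ (k * s)) = z := by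
        intro s
        induction s with
        | zero => simp
        | succ s ih =>
          have : 2 ^ (k * (s+1)) = 2 ^ (k * s) * 2 ^ k := by rw [← pow_add, Nat.mul_succ]
          rw [this, pow_mul, ih, hz]
      have := key m
      rwa [pow_mod_n hcard, hm, pow_one] at this
  have : z * (z - 1) = 0 := by rw [mul_sub, ← sq, hz2]; ring
  rcases mul_eq_zero.mp this with h | h
  · exact Or.inl h
  · exact Or.inr (by linear_combination h)

omit hcard in
lemma tr_mul_exists {u : F} (hu : u ≠ 0) : ∃ x : F, Tr (u * x) = 1 := by
  have h := traceForm_nondegenerate (ZMod 2) F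
  by_contra hx
  push_neg at hx
  apply hu
  apply h.1 u
  intro x
  have h2 := hx x
  rw [Algebra.traceForm_apply]
  by_contra h3
  exact h2 (zmod2_ne_zero h3)

omit hcard in
lemma tr_one_exists : ∃ x : F, Tr x = 1 := by
  obtain ⟨x, hx⟩ := tr_mul_exists (F := F) one_ne_zero
  exact ⟨x, by rwa [one_mul] at hx⟩

omit hcard in
lemma sum_chi_tr : ∑ x : F, χ (Tr x) = 0 := by
  obtain ⟨x₀, hx₀⟩ := tr_one_exists (F := F)
  have h : ∑ x : F, χ (Tr (x + x₀)) = ∑ x : F, χ (Tr x) :=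
    Fintype.sum_equiv (Equiv.addRight x₀) _ _ (fun x => rfl)
  have h2 : ∀ x : F, χ (Tr (x + x₀)) = - χ (Tr x) := by
    intro x
    rw [Tr_add, hx₀, χ_add_one]
  rw [Finset.sum_congr rfl (fun x _ => h2 x), Finset.sum_neg_distrib] at h
  omega

lemma sum_chi_tr_mul [DecidableEq F] (u : F) :
    ∑ x : F, χ (Tr (x * u)) = if u = 0 then ((2:ℤ) ^ n) else 0 := by
  rcases eq_or_ne u 0 with rfl | hu
  · rw [if_pos rfl]
    have h1 : ∀ x : F, χ (Tr (x * 0)) = 1 := by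
      intro x; rw [mul_zero, Tr_zero, χ_zero]
    rw [Finset.sum_congr rfl fun x _ => h1 x, Finset.sum_const, Finset.card_univ, hcard]
    simp
  · rw [if_neg hu]
    have h : ∑ x : F, χ (Tr (x * u)) = ∑ x : F, χ (Tr x) :=
      Fintype.sum_bijective (fun x : F => x * u)
        (mulRight_bijective₀ u hu) _ _ (fun x => rfl)
    rw [h, sum_chi_tr]

end Fcard
end F
section Fop
variable {F : Type*} [Field F] [Fintype F] [Algebra (ZMod 2) F] [CharP F 2] [DecidableEq F]

omit [Fintype F] [Algebra (ZMod 2) F] [DecidableEq F] in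
lemma add_self_F (z : F) : z + z = 0 := by
  have := CharTwo.add_self_eq_zero (R := F) z
  exact this

/-- sum of χ∘f over a finset closed under addition on which f is additive -/
lemma sum_chi_subgroup (V : Finset F) (f : F → ZMod 2)
    (hadd : ∀ z ∈ V, ∀ w ∈ V, z + w ∈ V)
    (hf : ∀ z ∈ V, ∀ w ∈ V, f (z + w) = f z + f w) :
    (∀ z ∈ V, f z = 0) ∨ (∑ z ∈ V, χ (f z)) = 0 := by
  by_cases h : ∀ z ∈ V, f z = 0
  · exact Or.inl h
  · right
    push_neg at h
    obtain ⟨z₀, hz₀V, hz₀⟩ := h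
    have hz₀1 : f z₀ = 1 := zmod2_ne_zero hz₀
    have key : ∑ z ∈ V, χ (f z) = ∑ z ∈ V, χ (f (z + z₀)) := by
      apply Finset.sum_nbij' (fun z => z + z₀) (fun z => z + z₀)
      · intro z hz; exact hadd z hz z₀ hz₀V
      · intro z hz; exact hadd z hz z₀ hz₀V
      · intro z _; rw [add_assoc, add_self_F, add_zero]
      · intro z _; rw [add_assoc, add_self_F, add_zero]
      · intro z hz; rw [add_assoc, add_self_F, add_zero]
    have h2 : ∀ z ∈ V, χ (f (z + z₀)) = - χ (f z) := by
      intro z hz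
      rw [hf z hz z₀ hz₀V, hz₀1, χ_add_one]
    rw [Finset.sum_congr rfl h2, Finset.sum_neg_distrib] at key
    omega

variable (k : ℕ)

/-- the `σ`-linearized operator with coefficients `a`. -/
def op (d : ℕ) (a : ℕ → F) (z : F) : F :=
  ∑ i ∈ Finset.range (d + 1), a i * z ^ (2 ^ (k * i))

lemma op_ker_card (hfix : ∀ z : F, z ^ (2 ^ k) = z → z = 0 ∨ z = 1) :
    ∀ (d : ℕ) (a : ℕ → F), (∃ i, i ≤ d ∧ a i ≠ 0) →
      (Finset.univ.filter fun z : F => op k d a z = 0).card ≤ 2 ^ d := by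
  intro d
  induction d with
  | zero =>
    rintro a ⟨i, hi, ha⟩
    interval_cases i
    have : (Finset.univ.filter fun z : F => op k 0 a z = 0) ⊆ {0} := by
      intro z hz
      simp only [Finset.mem_filter, Finset.mem_univ, true_and, op, zero_add,
        Finset.sum_range_one, Nat.mul_zero, pow_zero, pow_one] at hz
      simp [mul_eq_zero.mp hz |>.resolve_left ha]
    calc _ ≤ ({0} : Finset F).card := Finset.card_le_card this
    _ ≤ 2 ^ 0 := by simp
  | succ d ih =>
    rintro a ⟨i, hi, ha⟩
    by_cases htop : a (d + 1) = 0
    ·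
      have hop : ∀ z : F, op k (d+1) a z = op k d a z := by
        intro z
        rw [op, Finset.sum_range_succ, htop, zero_mul, add_zero, op]
      have heq : (Finset.univ.filter fun z : F => op k (d+1) a z = 0)
          = (Finset.univ.filter fun z : F => op k d a z = 0) := by
        apply Finset.filter_congr; intro z _; rw [hop]
      rw [heq]
      have : i ≤ d := by
        by_contra h'
        push_neg at h'
        exact ha (by have hieq : i = d + 1 := by omega
                     rw [hieq]; exact htop)
      calc _ ≤ 2 ^ d := ih a ⟨i, this, ha⟩
      _ ≤ 2 ^ (d+1) := Nat.pow_le_pow_right (by norm_num) (by omega)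
    · by_cases hv : ∃ v : F, v ≠ 0 ∧ op k (d+1) a v = 0
      · obtain ⟨v, hv0, hva⟩ := hv
        set b : ℕ → F := fun i => a i * v ^ (2 ^ (k * i)) with hb
        -- op a (v z) = op b z
        have hab : ∀ z : F, op k (d+1) a (v * z) = op k (d+1) b z := by
          intro z
          apply Finset.sum_congr rfl
          intro i _
          rw [hb, mul_pow]
          ring
        -- card of ker a = card of ker b
        have hcardab : (Finset.univ.filter fun z : F => op k (d+1) a z = 0).card
            = (Finset.univ.filter fun z : F => op k (d+1) b z = 0).card := by
          apply Finset.card_nbij' (fun z => v⁻¹ * z) (fun z => v * z)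
          · intro z hz
            simp only [Finset.coe_filter, Set.mem_setOf_eq, Finset.mem_filter, Finset.mem_univ, true_and] at hz ⊢
            rw [← hab, mul_inv_cancel_left₀ hv0]
            exact hz
          · intro z hz
            simp only [Finset.coe_filter, Set.mem_setOf_eq, Finset.mem_filter, Finset.mem_univ, true_and] at hz ⊢
            rw [hab]; exact hz
          · intro z _; simp [mul_inv_cancel_left₀ hv0]
          · intro z _; simp [inv_mul_cancel_left₀ hv0]
        rw [hcardab]
        -- sum of b's is zero
        have hsum : op k (d+1) b 1 = 0 := by
          rw [← hab, mul_one]; exact hva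
        -- telescoping
        set g : F → F := fun z => z ^ (2 ^ k) + z with hg
        set c : ℕ → F := fun j => ∑ i ∈ Finset.range (d+2), if j < i then b i else 0 with hc
        have tele : ∀ (z : F) (i : ℕ),
            z ^ (2 ^ (k * i)) = z + ∑ j ∈ Finset.range i, (g z) ^ (2 ^ (k * j)) := by
          intro z i
          induction i with
          | zero => simp
          | succ i ihz =>
            have e1 : z ^ (2 ^ (k * (i+1))) = (z ^ (2 ^ (k * i))) ^ (2 ^ k) := by
              rw [← pow_mul, ← pow_add, Nat.mul_succ]
            rw [e1, ihz, add_pow_char_pow, sum_pow_char_pow]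
            have e2 : ∀ j, ((g z) ^ (2 ^ (k * j))) ^ (2 ^ k) = (g z) ^ (2 ^ (k * (j+1))) := by
              intro j; rw [← pow_mul, ← pow_add, Nat.mul_succ]
            rw [Finset.sum_congr rfl fun j _ => e2 j]
            rw [Finset.sum_range_succ' (fun j => (g z) ^ (2 ^ (k * j))) i]
            have : (g z) ^ (2 ^ (k * 0)) = z ^ (2 ^ k) + z := by
              rw [Nat.mul_zero, pow_zero, pow_one, hg]
            rw [this]
            have h2 := add_self_F (z : F)
            ring_nf
            linear_combination (-1 : F) * h2
        -- sum of b's is zero, as a plain sum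
        have hb0 : ∑ i ∈ Finset.range (d+2), b i = 0 := by
          have := hsum
          simp only [op, one_pow, mul_one] at this
          exact this
        -- the key factorization identity
        have extend : ∀ (h : ℕ → F) (i : ℕ), i ≤ d + 1 →
            ∑ j ∈ Finset.range i, h j
              = ∑ j ∈ Finset.range (d+1), if j < i then h j else 0 := by
          intro h i hi2
          rw [Finset.sum_ite, Finset.sum_const_zero, add_zero]
          apply Finset.sum_congr _ (fun _ _ => rfl)
          ext j
          simp only [Finset.mem_filter, Finset.mem_range]
          omega
        have key : ∀ z : F, op k (d+1) b z = op k d c (g z) := by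
          intro z
          have step1 : op k (d+1) b z
              = (∑ i ∈ Finset.range (d+2), b i) * z
                + ∑ i ∈ Finset.range (d+2), b i
                    * ∑ j ∈ Finset.range i, (g z) ^ (2 ^ (k * j)) := by
            rw [op, Finset.sum_mul, ← Finset.sum_add_distrib]
            apply Finset.sum_congr rfl
            intro i _
            rw [tele z i]
            ring
          rw [step1, hb0, zero_mul, zero_add]
          have step2 : ∀ i ∈ Finset.range (d+2),
              b i * ∑ j ∈ Finset.range i, (g z) ^ (2 ^ (k * j))
                = ∑ j ∈ Finset.range (d+1),
                    if j < i then b i * (g z) ^ (2 ^ (k * j)) else 0 := by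
            intro i hi2
            rw [Finset.mul_sum, extend (fun j => b i * (g z) ^ (2 ^ (k * j))) i
              (by simpa [Nat.lt_succ_iff] using Finset.mem_range.mp hi2)]
          rw [Finset.sum_congr rfl step2, Finset.sum_comm]
          apply Finset.sum_congr rfl
          intro j _
          have : ∀ i, (if j < i then b i * (g z) ^ (2 ^ (k * j)) else 0)
              = (if j < i then b i else 0) * (g z) ^ (2 ^ (k * j)) := by
            intro i
            by_cases hji : j < i <;> simp [hji]
          rw [Finset.sum_congr rfl fun i _ => this i, ← Finset.sum_mul]
        -- leading coefficient of c is nonzero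
        have hcd : c d = b (d+1) := by
          have h0 : ∀ i ∈ Finset.range (d+2), i ≠ d+1 → (if d < i then b i else 0) = 0 := by
            intro i hi2 hne
            have := Finset.mem_range.mp hi2
            rw [if_neg (by omega)]
          have heval := Finset.sum_eq_single_of_mem (d+1)
            (Finset.self_mem_range_succ (d+1)) h0
          simp only [hc]
          rw [heval, if_pos (by omega)]
        have hcd0 : c d ≠ 0 := by
          rw [hcd, hb]
          exact mul_ne_zero htop (pow_ne_zero _ hv0)
        -- conclude via the fiber bound for g
        set s := Finset.univ.filter fun z : F => op k (d+1) b z = 0 with hs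
        set t := Finset.univ.filter fun z : F => op k d c z = 0 with ht
        have hmaps : ∀ z ∈ s, g z ∈ t := by
          intro z hz
          simp only [hs, ht, Finset.mem_filter, Finset.mem_univ, true_and] at hz ⊢
          rw [← key]; exact hz
        have hfiber : ∀ w ∈ t, (s.filter fun z => g z = w).card ≤ 2 := by
          intro w _
          rcases Finset.eq_empty_or_nonempty (s.filter fun z => g z = w) with he | hne
          · rw [he]; simp
          · obtain ⟨z₁, hz₁⟩ := hne
            have hgz₁ : g z₁ = w := (Finset.mem_filter.mp hz₁).2
            have hsub : (s.filter fun z => g z = w) ⊆ {z₁, z₁ + 1} := by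
              intro z₂ hz₂
              have hgz₂ : g z₂ = w := (Finset.mem_filter.mp hz₂).2
              have hzz : (z₁ + z₂) ^ (2 ^ k) = z₁ + z₂ := by
                have : g (z₁ + z₂) = g z₁ + g z₂ := by
                  simp only [hg]
                  rw [add_pow_char_pow]
                  ring
                rw [hgz₁, hgz₂, add_self_F] at this
                simp only [hg] at this
                have h2 := add_self_F (z₁ + z₂)
                linear_combination this - h2
              rcases hfix _ hzz with h0 | h1
              · have : z₂ = z₁ := by
                  have h2 := add_self_F z₁
                  linear_combination h0 - h2
                simp [this]
              · have : z₂ = z₁ + 1 := by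
                  have h2 := add_self_F z₁
                  linear_combination h1 - h2
                simp [this]
            calc (s.filter fun z => g z = w).card ≤ ({z₁, z₁ + 1} : Finset F).card :=
                  Finset.card_le_card hsub
            _ ≤ 2 := Finset.card_insert_le _ _ |>.trans (by simp)
        have hst := Finset.card_le_mul_card_image_of_maps_to hmaps 2 hfiber
        have hts := ih c ⟨d, le_refl d, hcd0⟩
        calc (Finset.univ.filter fun z : F => op k (d+1) b z = 0).card
            ≤ 2 * t.card := hst
        _ ≤ 2 * 2 ^ d := Nat.mul_le_mul_left 2 hts
        _ = 2 ^ (d+1) := by ring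
      · push_neg at hv
        have : (Finset.univ.filter fun z : F => op k (d+1) a z = 0) ⊆ {0} := by
          intro z hz
          simp only [Finset.mem_filter, Finset.mem_univ, true_and] at hz
          by_contra h0
          exact (hv z (by simpa using h0)) hz
        calc _ ≤ ({0} : Finset F).card := Finset.card_le_card this
        _ = 1 := by simp
        _ ≤ 2 ^ (d+1) := Nat.one_le_two_pow

end Fop
section FL
variable {F : Type*} [Field F] [Fintype F] [Algebra (ZMod 2) F] [CharP F 2] [DecidableEq F]

/-- the linearized polynomial attached to the quadratic part -/
def Lop (k n : ℕ) (b c : F) (z : F) : F :=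
  b * z ^ (2 ^ k) + (b * z) ^ (2 ^ (n - k % n)) +
    c * z ^ (2 ^ (2 * k)) + (c * z) ^ (2 ^ (n - (2 * k) % n))

/-- the function inside the trace -/
noncomputable def ff (k n : ℕ) (a b c : F) (x : F) : ZMod 2 :=
  Tr (a * x + b * x ^ (2 ^ k + 1) + c * x ^ (2 ^ (2 * k) + 1))

omit [Fintype F] [Algebra (ZMod 2) F] [DecidableEq F] in
lemma add_pow_two_pow (u v : F) (e : ℕ) : (u + v) ^ (2 ^ e) = u ^ (2 ^ e) + v ^ (2 ^ e) :=
  add_pow_char_pow u v 2 e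

lemma mod_add_self_dvd (n j : ℕ) (hn0 : n ≠ 0) : ((n - j % n) + j) % n = 0 := by
  have h2 : j % n < n := Nat.mod_lt _ (Nat.pos_of_ne_zero hn0)
  have h1 := Nat.div_add_mod j n
  have hms : n * (j / n + 1) = n * (j / n) + n := Nat.mul_succ n (j / n)
  generalize hA : n * (j / n) = A at h1 hms
  generalize hB : n * (j / n + 1) = B at hms
  have h3 : n - j % n + j = B := by omega
  rw [h3, ← hB, Nat.mul_mod_right]

lemma mod_shift {n m e : ℕ} (h0 : (m + e) % n = 0) (j : ℕ) :
    (m + e + j) % n = j % n := by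
  rw [Nat.add_mod, h0, zero_add, Nat.mod_mod_of_dvd j (dvd_refl n)]

variable {n : ℕ} (hcard : Fintype.card F = 2 ^ n) (hn0 : n ≠ 0)

include hcard in
lemma tr_twist (u x : F) (e m : ℕ) (hme : (m + e) % n = 0) :
    Tr (u ^ (2 ^ m) * x) = Tr (u * x ^ (2 ^ e)) := by
  rw [← Tr_pow_pow (F := F) e (u ^ (2 ^ m) * x), mul_pow, ← pow_mul, ← pow_add]
  have hcol : u ^ (2 ^ (m + e)) = u := by
    have := pow_eq_of_mod_eq hcard (j := m + e) (j' := 0)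
      (by simpa using hme) u
    simpa using this
  rw [hcol]

include hcard hn0 in
lemma ff_add (k : ℕ) (a b c x z : F) :
    ff k n a b c (x + z)
      = ff k n a b c x + ff k n a b c z + Tr (x * Lop k n b c z) := by
  have hq : (x + z) ^ (2 ^ k) = x ^ (2 ^ k) + z ^ (2 ^ k) := add_pow_two_pow x z k
  have hQ : (x + z) ^ (2 ^ (2 * k)) = x ^ (2 ^ (2 * k)) + z ^ (2 ^ (2 * k)) :=
    add_pow_two_pow x z (2 * k)
  have split : a * (x + z) + b * (x + z) ^ (2 ^ k + 1) + c * (x + z) ^ (2 ^ (2 * k) + 1)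
      = (a * x + b * x ^ (2 ^ k + 1) + c * x ^ (2 ^ (2 * k) + 1))
        + (a * z + b * z ^ (2 ^ k + 1) + c * z ^ (2 ^ (2 * k) + 1))
        + (x * (b * z ^ (2 ^ k)) + ((b * z) * x ^ (2 ^ k)
            + (x * (c * z ^ (2 ^ (2 * k))) + (c * z) * x ^ (2 ^ (2 * k))))) := by
    simp only [pow_succ, hq, hQ]
    ring
  show Tr _ = _
  rw [split, Tr_add, Tr_add]
  congr 1
  have c1 : Tr ((b * z) * x ^ (2 ^ k)) = Tr ((b * z) ^ (2 ^ (n - k % n)) * x) :=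
    (tr_twist hcard (b * z) x k (n - k % n) (mod_add_self_dvd n k hn0)).symm
  have c2 : Tr ((c * z) * x ^ (2 ^ (2 * k)))
      = Tr ((c * z) ^ (2 ^ (n - (2 * k) % n)) * x) :=
    (tr_twist hcard (c * z) x (2 * k) (n - (2 * k) % n)
      (mod_add_self_dvd n (2 * k) hn0)).symm
  rw [Tr_add, Tr_add, Tr_add, c1, c2]
  have expand : x * Lop k n b c z
      = x * (b * z ^ (2 ^ k)) + ((b * z) ^ (2 ^ (n - k % n)) * x
          + (x * (c * z ^ (2 ^ (2 * k))) + (c * z) ^ (2 ^ (n - (2 * k) % n)) * x)) := by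
    unfold Lop; ring
  rw [expand, Tr_add, Tr_add, Tr_add]

omit [Fintype F] [Algebra (ZMod 2) F] [DecidableEq F] in
lemma Lop_add (k : ℕ) (b c z w : F) :
    Lop k n b c (z + w) = Lop k n b c z + Lop k n b c w := by
  unfold Lop
  simp only [mul_add, add_pow_two_pow]
  ring

omit [Fintype F] [Algebra (ZMod 2) F] [DecidableEq F] in
lemma Lop_zero (k : ℕ) (b c : F) : Lop k n b c 0 = 0 := by
  unfold Lop
  rw [mul_zero, mul_zero, zero_pow (by positivity), zero_pow (by positivity),
    zero_pow (by positivity), zero_pow (by positivity)]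
  ring

/-- coefficients of the normalized operator `σ² ∘ L` -/
def coefA (k n : ℕ) (b c : F) : ℕ → F := fun i =>
  if i = 0 then c ^ (2 ^ ((n - (2 * k) % n) + 2 * k))
  else if i = 1 then b ^ (2 ^ ((n - k % n) + 2 * k))
  else if i = 3 then b ^ (2 ^ (2 * k))
  else if i = 4 then c ^ (2 ^ (2 * k))
  else 0

include hcard hn0 in
lemma Lop_pow_eq (k : ℕ) (b c z : F) :
    (Lop k n b c z) ^ (2 ^ (2 * k)) = op k 4 (coefA k n b c) z := by
  have h1 : (b * z ^ (2 ^ k)) ^ (2 ^ (2 * k))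
      = b ^ (2 ^ (2 * k)) * z ^ (2 ^ (k * 3)) := by
    rw [mul_pow, ← pow_mul, ← pow_add, show k + 2 * k = k * 3 from by ring]
  have h2 : ((b * z) ^ (2 ^ (n - k % n))) ^ (2 ^ (2 * k))
      = b ^ (2 ^ ((n - k % n) + 2 * k)) * z ^ (2 ^ (k * 1)) := by
    rw [← pow_mul, ← pow_add, mul_pow]
    congr 1
    apply pow_eq_of_mod_eq hcard
    rw [show (n - k % n) + 2 * k = ((n - k % n) + k) + k from by ring, Nat.mul_one]
    exact mod_shift (mod_add_self_dvd n k hn0) k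
  have h3 : ((c * z) ^ (2 ^ (n - (2 * k) % n))) ^ (2 ^ (2 * k))
      = c ^ (2 ^ ((n - (2 * k) % n) + 2 * k)) * z ^ (2 ^ (k * 0)) := by
    rw [← pow_mul, ← pow_add, mul_pow]
    congr 1
    apply pow_eq_of_mod_eq hcard
    rw [Nat.mul_zero, Nat.zero_mod]
    exact mod_add_self_dvd n (2 * k) hn0
  have h4 : (c * z ^ (2 ^ (2 * k))) ^ (2 ^ (2 * k))
      = c ^ (2 ^ (2 * k)) * z ^ (2 ^ (k * 4)) := by
    rw [mul_pow, ← pow_mul, ← pow_add, show 2 * k + 2 * k = k * 4 from by ring]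
  unfold Lop
  rw [add_pow_two_pow, add_pow_two_pow, add_pow_two_pow, h1, h2, h3, h4]
  unfold op coefA
  simp only [Finset.sum_range_succ, Finset.sum_range_one]
  norm_num
  ring

include hcard hn0 in
lemma ker_bound (k : ℕ) (b c : F) (hbc : ¬(b = 0 ∧ c = 0))
    (hfix : ∀ z : F, z ^ (2 ^ k) = z → z = 0 ∨ z = 1) :
    (Finset.univ.filter fun z : F => Lop k n b c z = 0).card ≤ 16 := by
  have hiff : ∀ z : F, (Lop k n b c z = 0) ↔ (op k 4 (coefA k n b c) z = 0) := by
    intro z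
    rw [← Lop_pow_eq hcard hn0 k b c z]
    exact (pow_eq_zero_iff (by positivity)).symm
  have heq : (Finset.univ.filter fun z : F => Lop k n b c z = 0)
      = (Finset.univ.filter fun z : F => op k 4 (coefA k n b c) z = 0) := by
    apply Finset.filter_congr
    intro z _
    exact hiff z
  rw [heq]
  have hwit : ∃ i, i ≤ 4 ∧ coefA k n b c i ≠ 0 := by
    by_cases hc : c = 0
    · have hb : b ≠ 0 := fun h => hbc ⟨h, hc⟩
      exact ⟨3, by norm_num, by simp [coefA, pow_ne_zero, hb]⟩
    · exact ⟨4, le_refl 4, by simp [coefA, pow_ne_zero, hc]⟩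
  calc _ ≤ 2 ^ 4 := op_ker_card k hfix 4 (coefA k n b c) hwit
  _ = 16 := by norm_num

include hcard hn0 in
lemma Ssq (k : ℕ) (a b c : F) :
    (∑ x : F, χ (ff k n a b c x)) * (∑ x : F, χ (ff k n a b c x))
      = (2 : ℤ) ^ n * ∑ z ∈ Finset.univ.filter (fun z : F => Lop k n b c z = 0),
          χ (ff k n a b c z) := by
  rw [Finset.sum_mul_sum]
  have hsq : ∀ t : ZMod 2, χ t * χ t = 1 := by decide
  have h1 : ∀ x : F, (∑ y : F, χ (ff k n a b c x) * χ (ff k n a b c y))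
      = ∑ z : F, χ (ff k n a b c z) * χ (Tr (x * Lop k n b c z)) := by
    intro x
    have e1 : (∑ z : F, χ (ff k n a b c x) * χ (ff k n a b c (x + z)))
        = ∑ y : F, χ (ff k n a b c x) * χ (ff k n a b c y) :=
      Fintype.sum_equiv (Equiv.addLeft x) _ _ (fun z => rfl)
    rw [← e1]
    apply Finset.sum_congr rfl
    intro z _
    rw [ff_add hcard hn0 k a b c x z, χ_add, χ_add]
    linear_combination (χ (ff k n a b c z) * χ (Tr (x * Lop k n b c z)))
      * hsq (ff k n a b c x)
  rw [Finset.sum_congr rfl fun x _ => h1 x, Finset.sum_comm]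
  have h2 : ∀ z : F, (∑ x : F, χ (ff k n a b c z) * χ (Tr (x * Lop k n b c z)))
      = χ (ff k n a b c z) * (if Lop k n b c z = 0 then (2:ℤ)^n else 0) := by
    intro z
    rw [← Finset.mul_sum, sum_chi_tr_mul hcard (Lop k n b c z)]
  rw [Finset.sum_congr rfl fun z _ => h2 z]
  have h3 : ∀ z : F, χ (ff k n a b c z) * (if Lop k n b c z = 0 then (2:ℤ)^n else 0)
      = (if Lop k n b c z = 0 then (2:ℤ)^n * χ (ff k n a b c z) else 0) := by
    intro z
    by_cases h : Lop k n b c z = 0 <;> simp [h, mul_comm]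
  rw [Finset.sum_congr rfl fun z _ => h3 z, ← Finset.sum_filter, ← Finset.mul_sum]

include hcard hn0 in
lemma V_card_pow_two (k : ℕ) (b c : F) :
    ∃ w : ℕ, w ≤ n ∧
      ((Finset.univ.filter fun z : F => Lop k n b c z = 0).card : ℕ) = 2 ^ w := by
  classical
  let V : AddSubgroup F :=
    { carrier := {z : F | Lop k n b c z = 0}
      zero_mem' := Lop_zero k b c
      add_mem' := by
        intro x y hx hy
        simp only [Set.mem_setOf_eq] at hx hy ⊢
        rw [Lop_add, hx, hy, add_zero]
      neg_mem' := by
        intro x hx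
        simpa [CharTwo.neg_eq] using hx }
  have hV : Nat.card V = (Finset.univ.filter fun z : F => Lop k n b c z = 0).card := by
    have e : (V : Type _) ≃ {z : F // Lop k n b c z = 0} :=
      Equiv.subtypeEquivRight (fun z => Iff.rfl)
    rw [Nat.card_congr e, Nat.card_eq_fintype_card, Fintype.card_subtype]
  have hdvd : Nat.card V ∣ Nat.card F := AddSubgroup.card_addSubgroup_dvd_card V
  rw [Nat.card_eq_fintype_card (α := F), hcard] at hdvd
  obtain ⟨w, hw, hcardV⟩ := (Nat.dvd_prime_pow Nat.prime_two).mp hdvd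
  exact ⟨w, hw, by rw [← hV, hcardV]⟩

end FL

end Stmt1


open Stmt1 in
/-- For odd `n`, `gcd(k,n)=1` and `(a,b,c) ≠ (0,0,0)`, the exponential sum
`∑_x (-1)^{Tr(ax + bx^{2^k+1} + cx^{2^{2k}+1})}` takes one of five values. -/
theorem stmt_1 (n k : ℕ) (hn : Odd n) (hk : 0 < k) (hkn : Nat.gcd k n = 1)
    (a b c : GaloisField 2 n) (habc : ¬(a = 0 ∧ b = 0 ∧ c = 0)) :
    (∑ x : GaloisField 2 n,
        if Algebra.trace (ZMod 2) (GaloisField 2 n)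
            (a * x + b * x ^ (2 ^ k + 1) + c * x ^ (2 ^ (2 * k) + 1)) = 0
        then (1 : ℤ) else -1) ∈
      ({0, 2 ^ ((n + 1) / 2), -2 ^ ((n + 1) / 2),
        2 ^ ((n + 3) / 2), -2 ^ ((n + 3) / 2)} : Set ℤ) := by
  haveI : DecidableEq (GaloisField 2 n) := Classical.decEq _
  have hn0 : n ≠ 0 := by rcases hn with ⟨m, hm⟩; omega
  have hcard : Fintype.card (GaloisField 2 n) = 2 ^ n := by
    rw [← Nat.card_eq_fintype_card]; exact GaloisField.card 2 n hn0
  have hfix : ∀ z : GaloisField 2 n, z ^ (2 ^ k) = z → z = 0 ∨ z = 1 :=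
    fun z hz => fixed_points hcard hkn hn0 z hz
  have hSdef : (∑ x : GaloisField 2 n,
      if Algebra.trace (ZMod 2) (GaloisField 2 n)
          (a * x + b * x ^ (2 ^ k + 1) + c * x ^ (2 ^ (2 * k) + 1)) = 0
      then (1 : ℤ) else -1) = ∑ x : GaloisField 2 n, χ (ff k n a b c x) := rfl
  rw [hSdef]
  set S : ℤ := ∑ x : GaloisField 2 n, χ (ff k n a b c x) with hS
  set V : Finset (GaloisField 2 n) :=
    Finset.univ.filter (fun z : GaloisField 2 n => Lop k n b c z = 0) with hV
  have hSsq : S * S = 2 ^ n * ∑ z ∈ V, χ (ff k n a b c z) := Ssq hcard hn0 k a b c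
  have hVmem : ∀ z : GaloisField 2 n, z ∈ V ↔ Lop k n b c z = 0 := by
    intro z; simp [hV]
  have hadd : ∀ z ∈ V, ∀ w ∈ V, z + w ∈ V := by
    intro z hz w hw
    rw [hVmem] at *
    rw [Lop_add, hz, hw, add_zero]
  have hf : ∀ z ∈ V, ∀ w ∈ V, ff k n a b c (z + w) = ff k n a b c z + ff k n a b c w := by
    intro z hz w hw
    rw [hVmem] at hw
    rw [ff_add hcard hn0 k a b c z w, hw, mul_zero, Tr_zero, add_zero]
  rcases sum_chi_subgroup V (ff k n a b c) hadd hf with hall | hzero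
  swap
  · -- sum over kernel vanishes : S = 0
    have : S * S = 0 := by rw [hSsq, hzero, mul_zero]
    have hS0 : S = 0 := by
      rcases mul_eq_zero.mp this with h | h <;> exact h
    rw [hS0]
    exact Set.mem_insert 0 _
  · by_cases hbc : b = 0 ∧ c = 0
    · exfalso
      obtain ⟨hb, hc⟩ := hbc
      subst hb; subst hc
      have ha : a ≠ 0 := by tauto
      obtain ⟨x, hx⟩ := tr_mul_exists (F := GaloisField 2 n) ha
      have hxV : x ∈ V := by
        rw [hVmem]
        show (0:GaloisField 2 n) * x ^ (2^k) + ((0:GaloisField 2 n) * x) ^ (2^(n - k % n)) +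
          (0:GaloisField 2 n) * x ^ (2^(2*k)) + ((0:GaloisField 2 n) * x) ^ (2^(n - (2*k) % n)) = 0
        rw [zero_mul, zero_mul, zero_mul, zero_pow (by positivity),
          zero_pow (by positivity)]
        ring
      have h0 := hall x hxV
      unfold ff at h0
      rw [zero_mul, zero_mul, add_zero, add_zero] at h0
      rw [h0] at hx
      exact absurd hx (by decide)
    · have hT : ∑ z ∈ V, χ (ff k n a b c z) = (V.card : ℤ) := by
        rw [Finset.sum_congr rfl (fun z hz => by rw [hall z hz, χ_zero]),
          Finset.sum_const]
        simp [nsmul_eq_mul]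
      obtain ⟨w, hwn, hVcard⟩ := V_card_pow_two hcard hn0 k b c
      have hb16 := ker_bound hcard hn0 k b c hbc hfix
      have hw4 : w ≤ 4 := by
        rw [hVcard] at hb16
        have h24 : (2:ℕ) ^ w ≤ 2 ^ 4 := le_trans hb16 (by norm_num)
        exact (Nat.pow_le_pow_iff_right one_lt_two).mp h24
      have hSS : S * S = 2 ^ (n + w) := by
        rw [hSsq, hT, hVcard]
        push_cast
        rw [← pow_add]
      have habs : S.natAbs ^ 2 = 2 ^ (n + w) := by
        rw [sq, ← Int.natAbs_mul, hSS, Int.natAbs_pow]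
        rfl
      have hdvd : S.natAbs ∣ 2 ^ (n + w) := by
        rw [← habs]
        exact dvd_pow_self _ (by norm_num)
      obtain ⟨j, hj, hSj⟩ := (Nat.dvd_prime_pow Nat.prime_two).mp hdvd
      have h2j : 2 * j = n + w := by
        have hpow : (2:ℕ) ^ (2 * j) = 2 ^ (n + w) := by
          rw [← habs, hSj, ← pow_mul, mul_comm j 2]
        exact Nat.pow_right_injective (le_refl 2) hpow
      have hSpm : S = (2:ℤ) ^ j ∨ S = -(2:ℤ) ^ j := by
        rcases Int.natAbs_eq S with h | h
        · left; rw [h, hSj]; push_cast; ring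
        · right; rw [h, hSj]; push_cast; ring
      have hwodd : w = 1 ∨ w = 3 := by
        rcases hn with ⟨m, hm⟩
        omega
      simp only [Set.mem_insert_iff, Set.mem_singleton_iff]
      rcases hwodd with h1 | h3
      · have hj1 : j = (n + 1) / 2 := by omega
        rw [hj1] at hSpm
        rcases hSpm with h | h
        · exact Or.inr (Or.inl h)
        · exact Or.inr (Or.inr (Or.inl h))
      · have hj3 : j = (n + 3) / 2 := by omega
        rw [hj3] at hSpm
        rcases hSpm with h | h
        · exact Or.inr (Or.inr (Or.inr (Or.inl h)))
        · exact Or.inr (Or.inr (Or.inr (Or.inr h)))
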